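/- Let K be a field, A an n×n matrix over K, and w = w_1 w_2 ⋯ w_m a word over {1, …, n} in which every index of {1, …, n} appears at least once. Let C be the m×m matrix with C_{pq} = (A − I)_{w_p, w_q} if p > q and C_{pq} = 0 otherwise, and let ^c denote compression with respect to w: for an m×m matrix M, [^c(M)]_{ik} = Σ_{p : w_p = i} Σ_{q : w_q = k} M_{pq}. Then F_{w_m}(A)·F_{w_{m−1}}(A)⋯F_{w_1}(A) = I + Σ_{l=0}^{m−1} ^c(C^l)·(A − I), where C^0 = I. -/

import Mathlib

open Matrix Finset

/-- `sdsF A i` is the matrix that agrees with the identity matrix in every row except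
row `i`, whose `i`-th row equals the `i`-th row of `A`. -/
def sdsF {K : Type*} [Field K] {n : ℕ} (A : Matrix (Fin n) (Fin n) K) (i : Fin n) :
    Matrix (Fin n) (Fin n) K :=
  Matrix.of fun k j => if k = i then A k j else if k = j then 1 else 0

/-- The map of the linear SDS with local matrix `A` and word update schedule
`w = w₁ w₂ ⋯ w_m` (`w₁` updated first): the product `F_{w_m}(A) ⋯ F_{w_1}(A)`. -/
def wordMap {K : Type*} [Field K] {n m : ℕ} (A : Matrix (Fin n) (Fin n) K)
    (w : Fin m → Fin n) : Matrix (Fin n) (Fin n) K :=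
  (((List.finRange m).reverse).map fun p => sdsF A (w p)).prod

/-- The `m×m` matrix `C` indexed by the positions of the word `w`, with
`C p q = (A − I) (w p) (w q)` if `p > q` and `0` otherwise. -/
def wordC {K : Type*} [Field K] {n m : ℕ} (A : Matrix (Fin n) (Fin n) K)
    (w : Fin m → Fin n) : Matrix (Fin m) (Fin m) K :=
  Matrix.of fun p q => if q < p then (A - 1) (w p) (w q) else 0

/-- Block-compression with respect to the word `w`: for an `m×m` matrix `M`,
`[^c(M)]_{ik} = Σ_{p : w p = i} Σ_{q : w q = k} M p q`. -/
def wordComp {K : Type*} [Field K] {n m : ℕ} (w : Fin m → Fin n)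
    (M : Matrix (Fin m) (Fin m) K) : Matrix (Fin n) (Fin n) K :=
  Matrix.of fun i k => ∑ p : Fin m, ∑ q : Fin m, if w p = i ∧ w q = k then M p q else 0

section Aux

variable {K : Type*} [Field K] {n m : ℕ}

/-- The single-entry matrix with a 1 at position `(i, i)`. -/
def pick (i : Fin n) : Matrix (Fin n) (Fin n) K :=
  Matrix.of fun a b => if a = i ∧ b = i then 1 else 0

lemma sdsF_eq (A : Matrix (Fin n) (Fin n) K) (i : Fin n) :
    sdsF A i = 1 + pick i * (A - 1) := by
  ext k j
  simp only [sdsF, pick, Matrix.add_apply, Matrix.mul_apply, Matrix.one_apply, Matrix.of_apply,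
    ite_and, Matrix.sub_apply]
  rcases eq_or_ne k i with rfl | hk
  · simp [Matrix.one_apply]
  · simp [hk, Matrix.one_apply]

lemma wordMap_succ (A : Matrix (Fin n) (Fin n) K) (w : Fin (m + 1) → Fin n) :
    wordMap A w = wordMap A (w ∘ Fin.succ) * sdsF A (w 0) := by
  simp [wordMap, List.finRange_succ, List.map_reverse, Function.comp_def]

lemma wordC_pow_apply (A : Matrix (Fin n) (Fin n) K) (w : Fin m → Fin n) (l : ℕ) :
    ∀ p q : Fin m, (p : ℕ) < l + (q : ℕ) → (wordC A w ^ l) p q = 0 := by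
  induction l with
  | zero =>
    intro p q h
    rw [pow_zero, Matrix.one_apply_ne]
    intro e; rw [e] at h; omega
  | succ l ih =>
    intro p q h
    rw [pow_succ', Matrix.mul_apply]
    apply Finset.sum_eq_zero
    intro r _
    by_cases hr : r < p
    · rw [ih r q (by rw [Fin.lt_def] at hr; omega), mul_zero]
    · simp [wordC, hr]

lemma wordC_pow_self (A : Matrix (Fin n) (Fin n) K) (w : Fin m → Fin n) :
    wordC A w ^ m = 0 := by
  ext p q
  rw [wordC_pow_apply A w m p q (by omega)]
  simp

lemma wordC_pow_zero_row (A : Matrix (Fin n) (Fin n) K) (w : Fin (m + 1) → Fin n) (l : ℕ)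
    (q : Fin (m + 1)) : (wordC A w ^ (l + 1)) 0 q = 0 := by
  rw [pow_succ', Matrix.mul_apply]
  apply Finset.sum_eq_zero
  intro r _
  simp [wordC, Fin.not_lt_zero]

lemma wordC_pow_block (A : Matrix (Fin n) (Fin n) K) (w : Fin (m + 1) → Fin n) (l : ℕ) :
    ∀ p q : Fin m, (wordC A w ^ l) p.succ q.succ = (wordC A (w ∘ Fin.succ) ^ l) p q := by
  induction l with
  | zero =>
    intro p q
    simp [Matrix.one_apply, Fin.succ_inj]
  | succ l ih =>
    intro p q
    rw [pow_succ, pow_succ, Matrix.mul_apply, Matrix.mul_apply, Fin.sum_univ_succ]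
    have h0 : wordC A w 0 q.succ = 0 := by simp [wordC, Fin.not_lt_zero]
    rw [h0, mul_zero, zero_add]
    apply Finset.sum_congr rfl
    intro r _
    rw [ih p r]
    congr 1
    simp [wordC, Fin.succ_lt_succ_iff, Function.comp]

lemma wordC_pow_col (A : Matrix (Fin n) (Fin n) K) (w : Fin (m + 1) → Fin n) (l : ℕ)
    (p : Fin m) : (wordC A w ^ (l + 1)) p.succ 0 =
      ∑ r : Fin m, (wordC A (w ∘ Fin.succ) ^ l) p r * (A - 1) (w r.succ) (w 0) := by
  rw [pow_succ, Matrix.mul_apply, Fin.sum_univ_succ]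
  have h0 : wordC A w 0 0 = 0 := by simp [wordC]
  rw [h0, mul_zero, zero_add]
  apply Finset.sum_congr rfl
  intro r _
  rw [wordC_pow_block]
  congr 1

lemma wordComp_zero (w : Fin m → Fin n) :
    wordComp w (0 : Matrix (Fin m) (Fin m) K) = 0 := by
  ext i k
  simp [wordComp]

lemma wordComp_one (w : Fin (m + 1) → Fin n) :
    wordComp w (1 : Matrix (Fin (m + 1)) (Fin (m + 1)) K)
      = pick (w 0) + wordComp (w ∘ Fin.succ) (1 : Matrix (Fin m) (Fin m) K) := by
  ext i k
  have key : ∀ (m' : ℕ) (u : Fin m' → Fin n),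
      (wordComp u (1 : Matrix (Fin m') (Fin m') K)) i k
        = ∑ p : Fin m', if u p = i ∧ u p = k then 1 else 0 := by
    intro m' u
    simp only [wordComp, Matrix.of_apply]
    apply Finset.sum_congr rfl
    intro p _
    rw [Finset.sum_eq_single p]
    · simp
    · intro q _ hq
      simp [Matrix.one_apply, Ne.symm hq]
    · simp
  rw [Matrix.add_apply, key, key, Fin.sum_univ_succ]
  simp [pick, Function.comp, eq_comm]

lemma wordComp_succ (A : Matrix (Fin n) (Fin n) K) (w : Fin (m + 1) → Fin n) (l : ℕ) :
    wordComp w (wordC A w ^ (l + 1))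
      = wordComp (w ∘ Fin.succ) (wordC A (w ∘ Fin.succ) ^ (l + 1))
        + wordComp (w ∘ Fin.succ) (wordC A (w ∘ Fin.succ) ^ l) * (A - 1) * pick (w 0) := by
  ext i k
  set v := w ∘ Fin.succ with hv
  set C := wordC A v with hC
  -- RHS second term
  have hpick : ((wordComp v (C ^ l) * (A - 1) * pick (w 0) : Matrix (Fin n) (Fin n) K)) i k
      = if k = w 0 then
          ∑ p : Fin m, ∑ q : Fin m,
            (if v p = i then (C ^ l) p q * (A - 1) (v q) (w 0) else 0)
        else 0 := by
    rw [Matrix.mul_apply]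
    simp only [pick, Matrix.of_apply, ite_and, mul_ite, mul_one, mul_zero]
    rw [Finset.sum_ite_eq' Finset.univ (w 0)]
    simp only [Finset.mem_univ, if_true]
    by_cases hk : k = w 0
    · simp only [hk, if_true, Matrix.mul_apply, wordComp, Matrix.of_apply, Finset.sum_mul]
      rw [Finset.sum_comm]
      apply Finset.sum_congr rfl
      intro p _
      rw [Finset.sum_comm]
      apply Finset.sum_congr rfl
      intro q _
      by_cases hvp : v p = i
      · simp [hvp, ite_and, ite_mul, zero_mul, Finset.sum_ite_eq]
      · simp [hvp]
    · simp [hk]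
  rw [Matrix.add_apply, hpick]
  -- LHS
  simp only [wordComp, Matrix.of_apply]
  rw [Fin.sum_univ_succ]
  have h0 : (∑ q : Fin (m+1), if w 0 = i ∧ w q = k then (wordC A w ^ (l + 1)) 0 q else 0) = 0 := by
    apply Finset.sum_eq_zero
    intro q _
    rw [wordC_pow_zero_row]
    simp
  rw [h0, zero_add]
  have hsplit : ∀ p : Fin m,
      (∑ q : Fin (m+1), if w p.succ = i ∧ w q = k then (wordC A w ^ (l + 1)) p.succ q else 0)
      = (if v p = i ∧ k = w 0 then
            ∑ r : Fin m, (C ^ l) p r * (A - 1) (v r) (w 0) else 0)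
        + ∑ q : Fin m, if v p = i ∧ v q = k then (C ^ (l+1)) p q else 0 := by
    intro p
    rw [Fin.sum_univ_succ, wordC_pow_col]
    congr 1
    · rw [hC, hv]
      simp only [Function.comp]
      congr 1
      simp [eq_comm]
    · apply Finset.sum_congr rfl
      intro q _
      rw [wordC_pow_block]
      rfl
  rw [Finset.sum_congr rfl fun p _ => hsplit p, Finset.sum_add_distrib]
  rw [add_comm]
  congr 1
  by_cases hk : k = w 0
  · simp only [hk, and_true, if_true]
    apply Finset.sum_congr rfl
    intro p _
    split_ifs with h
    · simp [h]
    · simp [h]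
  · simp [hk]

lemma linear_sds_aux (A : Matrix (Fin n) (Fin n) K) :
    ∀ {m : ℕ} (w : Fin m → Fin n),
      wordMap A w = 1 + ∑ l ∈ Finset.range m, wordComp w (wordC A w ^ l) * (A - 1) := by
  intro m
  induction m with
  | zero =>
    intro w
    simp [wordMap]
  | succ m ih =>
    intro w
    rw [wordMap_succ, ih (w ∘ Fin.succ), sdsF_eq]
    set v := w ∘ Fin.succ with hv
    set C := wordC A v with hC
    set S := ∑ l ∈ Finset.range m, wordComp v (C ^ l) * (A - 1) with hS
    have key : (∑ l ∈ Finset.range m, wordComp v (C ^ (l + 1)) * (A - 1))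
        + wordComp v (C ^ 0) * (A - 1) = S := by
      rw [← Finset.sum_range_succ' (fun l => wordComp v (C ^ l) * (A - 1)) m,
        Finset.sum_range_succ, hS]
      rw [wordC_pow_self, wordComp_zero]
      simp
    have key' : (∑ l ∈ Finset.range m, wordComp v (C ^ (l + 1)) * (A - 1))
        = S - wordComp v 1 * (A - 1) := by
      have h1 : wordComp v (C ^ 0) * (A - 1) = wordComp v 1 * (A - 1) := by rw [pow_zero]
      rw [← key, h1]
      abel
    have expand : ∀ l, wordComp w (wordC A w ^ (l + 1)) * (A - 1)
        = wordComp v (C ^ (l + 1)) * (A - 1)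
          + wordComp v (C ^ l) * (A - 1) * (pick (w 0) * (A - 1)) := by
      intro l
      rw [wordComp_succ A w l, add_mul, ← hv, ← hC]
      noncomm_ring
    calc (1 + S) * (1 + pick (w 0) * (A - 1))
        = 1 + (S + pick (w 0) * (A - 1) + S * (pick (w 0) * (A - 1))) := by
          noncomm_ring
      _ = 1 + (∑ l ∈ Finset.range m, wordComp w (wordC A w ^ (l + 1)) * (A - 1)
            + wordComp w (wordC A w ^ 0) * (A - 1)) := by
          congr 1
          have h2 : (∑ l ∈ Finset.range m,
              wordComp v (C ^ l) * (A - 1) * (pick (w 0) * (A - 1)))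
              = S * (pick (w 0) * (A - 1)) := by
            rw [hS, Finset.sum_mul]
          rw [Finset.sum_congr rfl fun l _ => expand l, Finset.sum_add_distrib,
            key', h2, pow_zero, wordComp_one, ← hv, add_mul]
          abel
      _ = 1 + ∑ l ∈ Finset.range (m + 1), wordComp w (wordC A w ^ l) * (A - 1) := by
          rw [Finset.sum_range_succ']

end Aux

/-- **Intermediate formula for linear SDS over words.**
Let `w = w₁ ⋯ w_m` be a word over `{1, …, n}` containing every index at least once.
Then `F_{w_m}(A) ⋯ F_{w_1}(A) = I + Σ_{l=0}^{m-1} ^c(C^l) · (A − I)`. -/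
theorem linear_sds_word_power_sum_formula {K : Type*} [Field K] {n m : ℕ}
    (A : Matrix (Fin n) (Fin n) K) (w : Fin m → Fin n)
    (hw : Function.Surjective w) :
    wordMap A w = 1 + ∑ l ∈ Finset.range m, wordComp w (wordC A w ^ l) * (A - 1) := by
  exact linear_sds_aux A w
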